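/- Let φ be a flow on a compact metric space X. If Ω(φ) \ Sing(φ) is a closed subset of X, then h*(φ) = h(φ); that is, the Bowen entropy of the nonsingular points equals the topological entropy of φ. -/

import Mathlib

open Set Metric Filter
open scoped Classical

variable {X : Type*}

/-- A (continuous) flow on a topological space, given as a map `φ : ℝ → X → X`. -/
def IsFlowMap [TopologicalSpace X] (φ : ℝ → X → X) : Prop :=
  Continuous (fun p : ℝ × X => φ p.1 p.2) ∧ (∀ x : X, φ 0 x = x) ∧
    ∀ t s : ℝ, ∀ x : X, φ (t + s) x = φ t (φ s x)

/-- The singular set of a flow. -/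
def SingSet (φ : ℝ → X → X) : Set X := {x : X | ∀ t : ℝ, φ t x = x}

/-- An increasing homeomorphism of `ℝ`: a strictly increasing continuous bijection. -/
def IncreasingHomeo (s : ℝ → ℝ) : Prop :=
  Continuous s ∧ StrictMono s ∧ Function.Bijective s

/-- Distance from a point to a set, with the convention that the distance
to the empty set is the diameter of the whole space. -/
noncomputable def distToSet [MetricSpace X] (z : X) (A : Set X) : ℝ :=
  if A = ∅ then Metric.diam (Set.univ : Set X) else Metric.infDist z A

/-- The orbit of a point under a flow. -/
def flowOrbit (φ : ℝ → X → X) (x : X) : Set X := Set.range fun t : ℝ => φ t x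

/-- Bowen–Walters expansivity of a flow on a subset `Λ`. -/
def ExpansiveOn [MetricSpace X] (φ : ℝ → X → X) (Λ : Set X) : Prop :=
  ∀ ε > (0:ℝ), ∃ δ > (0:ℝ), ∀ x ∈ Λ, ∀ y ∈ Λ, ∀ s : ℝ → ℝ, Continuous s → s 0 = 0 →
    (∀ t : ℝ, dist (φ t x) (φ (s t) y) ≤ δ) →
    ∃ τ ∈ Set.Icc (-ε) ε, y = φ τ x

/-- Komuro k*-expansivity of a flow on a subset `Λ`. -/
def KStarExpansiveOn [MetricSpace X] (φ : ℝ → X → X) (Λ : Set X) : Prop :=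
  ∀ ε > (0:ℝ), ∃ δ > (0:ℝ), ∀ x ∈ Λ, ∀ y ∈ Λ, ∀ s : ℝ → ℝ,
    IncreasingHomeo s → s 0 = 0 →
    (∀ t : ℝ, dist (φ t x) (φ (s t) y) ≤ δ) →
    ∃ t₀ : ℝ, ∃ τ ∈ Set.Icc (t₀ - ε) (t₀ + ε), φ (s t₀) y = φ τ x

/-- Singular expansivity of a flow on a subset `Λ`. -/
def SingularExpansiveOn [MetricSpace X] (φ : ℝ → X → X) (Λ : Set X) : Prop :=
  ∀ ε > (0:ℝ), ∃ δ > (0:ℝ), ∀ x ∈ Λ, ∀ y ∈ Λ, ∀ s : ℝ → ℝ, IncreasingHomeo s →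
    (∀ t : ℝ, dist (φ t x) (φ (s t) y) ≤ δ * distToSet (φ t x) (SingSet φ)) →
    ∃ t₀ : ℝ, ∃ τ ∈ Set.Icc (t₀ - ε) (t₀ + ε), φ (s t₀) y = φ τ x

/-- A periodic point of a flow: a nonsingular point with a positive period. -/
def IsPeriodicPoint (φ : ℝ → X → X) (x : X) : Prop :=
  x ∉ SingSet φ ∧ ∃ t : ℝ, 0 < t ∧ φ t x = x

/-- An invariant set `K` is dynamically isolated if it has a neighborhood `U`
with `K = ⋂_{t ∈ ℝ} φ_t(U)`. -/
def DynIsolated [TopologicalSpace X] (φ : ℝ → X → X) (K : Set X) : Prop :=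
  ∃ U : Set X, K ⊆ interior U ∧ K = ⋂ t : ℝ, φ t '' U

/-- Equicontinuity of a flow. -/
def EquicontinuousFlow [MetricSpace X] (φ : ℝ → X → X) : Prop :=
  ∀ ε > (0:ℝ), ∃ δ > (0:ℝ), ∀ x y : X, dist x y ≤ δ →
    ∀ t : ℝ, dist (φ t x) (φ t y) ≤ ε

/-- Singular equicontinuity of a flow. -/
def SingularEquicontinuous [MetricSpace X] (φ : ℝ → X → X) : Prop :=
  ∀ ε > (0:ℝ), ∃ δ > (0:ℝ), ∀ x y : X, dist x y ≤ δ * distToSet x (SingSet φ) →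
    ∀ t : ℝ, dist (φ t x) (φ t y) ≤ ε


/-- Minimal cardinality of a `(t, ε)`-spanning subset of `K`. -/
noncomputable def spanNum [MetricSpace X] (φ : ℝ → X → X) (K : Set X) (t ε : ℝ) : ℕ :=
  sInf {n : ℕ | ∃ F : Finset X, ↑F ⊆ K ∧ F.card = n ∧
    K ⊆ ⋃ x ∈ F, {y : X | ∀ s ∈ Set.Icc (0:ℝ) t, dist (φ s x) (φ s y) ≤ ε}}

/-- The topological entropy of the flow `φ` on the compact set `K`,
`h(φ,K) = lim_{ε→0⁺} limsup_{t→∞} (1/t) ln r(t,ε)`; since the inner quantity is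
monotone as `ε` decreases, the limit as `ε → 0⁺` is the supremum over `ε > 0`. -/
noncomputable def entOn [MetricSpace X] (φ : ℝ → X → X) (K : Set X) : EReal :=
  ⨆ (ε : ℝ) (_ : 0 < ε),
    Filter.limsup (fun t : ℝ => ((Real.log (spanNum φ K t ε : ℝ) / t : ℝ) : EReal))
      Filter.atTop

/-- The Bowen entropy of the nonsingular points:
`h*(φ) = sup {h(φ,K) : K ⊆ X \ Sing(φ) compact}`. -/
noncomputable def hStar [MetricSpace X] (φ : ℝ → X → X) : EReal :=
  ⨆ (K : Set X) (_ : IsCompact K) (_ : K ⊆ (SingSet φ)ᶜ), entOn φ K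

/-- The nonwandering set of a flow. -/
def NonWandering [TopologicalSpace X] (φ : ℝ → X → X) : Set X :=
  {x : X | ∀ U ∈ nhds x, ∀ T : ℝ, 0 < T → ∃ t : ℝ, T ≤ t ∧ (φ t '' U ∩ U).Nonempty}

set_option linter.unusedSectionVars false
section Aux
variable [MetricSpace X] [CompactSpace X] {φ : ℝ → X → X}

/-- Uniform continuity of the flow over a compact time interval. -/
lemma flow_uc (hφ : IsFlowMap φ) (C η : ℝ) (hη : 0 < η) :
    ∃ δ > (0:ℝ), ∀ x y : X, dist x y ≤ δ → ∀ u ∈ Set.Icc (0:ℝ) C, dist (φ u x) (φ u y) ≤ η := by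
  have hK : IsCompact ((Set.Icc (0:ℝ) C) ×ˢ (Set.univ : Set X)) :=
    isCompact_Icc.prod isCompact_univ
  have huc := hK.uniformContinuousOn_of_continuous hφ.1.continuousOn
  rw [Metric.uniformContinuousOn_iff] at huc
  obtain ⟨δ, hδ, H⟩ := huc η hη
  refine ⟨δ/2, by positivity, ?_⟩
  intro x y hxy u hu
  have hd : dist ((u, x) : ℝ × X) ((u, y) : ℝ × X) < δ := by
    rw [Prod.dist_eq]
    simp only [dist_self]
    rw [max_eq_right dist_nonneg]
    linarith
  exact le_of_lt (H (u, x) ⟨hu, Set.mem_univ _⟩ (u, y) ⟨hu, Set.mem_univ _⟩ hd)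

/-- A finite net with centers inside a compact set. -/
lemma exists_net_subset {K : Set X} (hK : IsCompact K) {δ : ℝ} (hδ : 0 < δ) :
    ∃ F : Finset X, ↑F ⊆ K ∧ K ⊆ ⋃ x ∈ F, Metric.ball x δ := by
  have htb := hK.totallyBounded
  rw [totallyBounded_iff_subset] at htb
  obtain ⟨t, htK, htfin, hcov⟩ := htb {p : X × X | dist p.1 p.2 < δ} (Metric.dist_mem_uniformity hδ)
  refine ⟨htfin.toFinset, by simpa using htK, ?_⟩
  intro y hy
  obtain ⟨c, hc, hyc⟩ := Set.mem_iUnion₂.mp (hcov hy)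
  exact Set.mem_iUnion₂.mpr ⟨c, htfin.mem_toFinset.mpr hc, hyc⟩

/-- spanning sets of minimal cardinality exist for compact sets. -/
lemma spanNum_mem (hφ : IsFlowMap φ) {K : Set X} (hK : IsCompact K) (t : ℝ) {ε : ℝ} (hε : 0 < ε) :
    ∃ F : Finset X, ↑F ⊆ K ∧ F.card = spanNum φ K t ε ∧
      K ⊆ ⋃ x ∈ F, {y : X | ∀ s ∈ Set.Icc (0:ℝ) t, dist (φ s x) (φ s y) ≤ ε} := by
  have hne : {n : ℕ | ∃ F : Finset X, ↑F ⊆ K ∧ F.card = n ∧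
      K ⊆ ⋃ x ∈ F, {y : X | ∀ s ∈ Set.Icc (0:ℝ) t, dist (φ s x) (φ s y) ≤ ε}}.Nonempty := by
    obtain ⟨δ, hδ, H⟩ := flow_uc hφ (max t 0) ε hε
    obtain ⟨F, hFK, hcov⟩ := exists_net_subset hK hδ
    refine ⟨F.card, F, hFK, rfl, ?_⟩
    intro y hy
    obtain ⟨c, hc, hyc⟩ := Set.mem_iUnion₂.mp (hcov hy)
    refine Set.mem_iUnion₂.mpr ⟨c, hc, ?_⟩
    intro s hs
    exact H c y (le_of_lt (by rw [dist_comm]; exact hyc)) s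
      ⟨hs.1, le_trans hs.2 (le_max_left _ _)⟩
  obtain ⟨F, h1, h2, h3⟩ := Nat.sInf_mem hne
  exact ⟨F, h1, h2, h3⟩

lemma spanNum_le_card (φ : ℝ → X → X) {K : Set X} {t ε : ℝ} {F : Finset X}
    (hFK : ↑F ⊆ K)
    (hcov : K ⊆ ⋃ x ∈ F, {y : X | ∀ s ∈ Set.Icc (0:ℝ) t, dist (φ s x) (φ s y) ≤ ε}) :
    spanNum φ K t ε ≤ F.card :=
  Nat.sInf_le ⟨F, hFK, rfl, hcov⟩

lemma spanNum_empty (φ : ℝ → X → X) (t ε : ℝ) : spanNum φ (∅ : Set X) t ε = 0 :=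
  Nat.le_zero.mp (le_trans (spanNum_le_card φ (F := (∅ : Finset X)) (by simp) (by simp)) (by simp))

lemma one_le_spanNum (hφ : IsFlowMap φ) {K : Set X} (hK : IsCompact K) (hKne : K.Nonempty)
    (t : ℝ) {ε : ℝ} (hε : 0 < ε) : 1 ≤ spanNum φ K t ε := by
  obtain ⟨F, _, hcard, hcov⟩ := spanNum_mem hφ hK t hε
  rcases Finset.eq_empty_or_nonempty F with rfl | hF
  · obtain ⟨y, hy⟩ := hKne
    simpa using hcov hy
  · exact le_of_le_of_eq (Finset.card_pos.mpr hF) hcard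
lemma ereal_le_coe_of_forall {a : EReal} {c : ℝ} (h : ∀ η : ℝ, 0 < η → a ≤ ((c + η : ℝ) : EReal)) :
    a ≤ (c : EReal) := by
  by_contra hlt
  push_neg at hlt
  obtain ⟨w, hw1, hw2⟩ := EReal.lt_iff_exists_real_btwn.mp hlt
  have hcw : c < w := EReal.coe_lt_coe_iff.mp hw1
  have := h (w - c) (by linarith)
  rw [show c + (w - c) = w by ring] at this
  exact absurd (lt_of_le_of_lt this hw2) (lt_irrefl _)

lemma log_nat_mono {m n : ℕ} (h : m ≤ n) : Real.log m ≤ Real.log n := by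
  rcases Nat.eq_zero_or_pos m with rfl | hm
  · simpa using Real.log_natCast_nonneg n
  · exact Real.log_le_log (by exact_mod_cast hm) (by exact_mod_cast h)

lemma limsup_coe_le {f : ℝ → ℝ} {c : ℝ} (h : ∀ η : ℝ, 0 < η → ∀ᶠ t in Filter.atTop, f t ≤ c + η) :
    Filter.limsup (fun t : ℝ => ((f t : ℝ) : EReal)) Filter.atTop ≤ (c : EReal) := by
  apply ereal_le_coe_of_forall
  intro η hη
  calc Filter.limsup (fun t : ℝ => ((f t : ℝ) : EReal)) Filter.atTop
      ≤ Filter.limsup (fun _ : ℝ => (((c + η : ℝ)) : EReal)) Filter.atTop :=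
        Filter.limsup_le_limsup (by
          filter_upwards [h η hη] with t ht
          exact EReal.coe_le_coe_iff.mpr ht)
    _ = ((c + η : ℝ) : EReal) := Filter.limsup_const _

lemma entOn_empty (φ : ℝ → X → X) : entOn φ (∅ : Set X) = 0 := by
  have hfun : ∀ ε : ℝ, (fun t : ℝ => ((Real.log (spanNum φ (∅ : Set X) t ε : ℝ) / t : ℝ) : EReal))
      = fun _ : ℝ => (0 : EReal) := by
    intro ε
    funext t
    rw [spanNum_empty]
    simp
  apply le_antisymm
  · apply iSup₂_le
    intro ε hε
    rw [hfun ε, Filter.limsup_const]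
  · refine le_trans ?_ (le_iSup₂ (f := fun (ε : ℝ) (_ : 0 < ε) =>
      Filter.limsup (fun t : ℝ => ((Real.log (spanNum φ (∅ : Set X) t ε : ℝ) / t : ℝ) : EReal))
        Filter.atTop) 1 one_pos)
    rw [hfun 1, Filter.limsup_const]

lemma spanNum_le_univ (hφ : IsFlowMap φ) (K : Set X) (t : ℝ) {ε : ℝ} (hε : 0 < ε) :
    spanNum φ K t ε ≤ spanNum φ (Set.univ : Set X) t (ε / 3) := by
  classical
  rcases Set.eq_empty_or_nonempty K with rfl | hKne
  · simp [spanNum_empty]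
  obtain ⟨F, -, hcard, hcov⟩ := spanNum_mem hφ isCompact_univ t (by positivity : (0:ℝ) < ε / 3)
  set g : X → X := fun x =>
    if h : ({y : X | ∀ s ∈ Set.Icc (0:ℝ) t, dist (φ s x) (φ s y) ≤ ε / 3} ∩ K).Nonempty
    then h.choose else hKne.choose with hg
  have hgK : ∀ x, g x ∈ K := by
    intro x
    by_cases h : ({y : X | ∀ s ∈ Set.Icc (0:ℝ) t, dist (φ s x) (φ s y) ≤ ε / 3} ∩ K).Nonempty
    · simp only [hg, dif_pos h]
      exact h.choose_spec.2
    · simp only [hg, dif_neg h]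
      exact hKne.choose_spec
  refine le_trans (spanNum_le_card φ (F := F.image g) ?_ ?_) ?_
  · intro y hy
    obtain ⟨x, -, rfl⟩ := Finset.mem_image.mp (by exact_mod_cast hy)
    exact hgK x
  · intro y hy
    obtain ⟨x, hxF, hyx⟩ := Set.mem_iUnion₂.mp (hcov (Set.mem_univ y))
    have hne : ({z : X | ∀ s ∈ Set.Icc (0:ℝ) t, dist (φ s x) (φ s z) ≤ ε / 3} ∩ K).Nonempty :=
      ⟨y, hyx, hy⟩
    have hgx : g x ∈ {z : X | ∀ s ∈ Set.Icc (0:ℝ) t, dist (φ s x) (φ s z) ≤ ε / 3} ∩ K := by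
      simp only [hg, dif_pos hne]
      exact hne.choose_spec
    refine Set.mem_iUnion₂.mpr ⟨g x, Finset.mem_image_of_mem g hxF, ?_⟩
    intro s hs
    calc dist (φ s (g x)) (φ s y) ≤ dist (φ s (g x)) (φ s x) + dist (φ s x) (φ s y) :=
          dist_triangle _ _ _
      _ ≤ ε / 3 + ε / 3 := add_le_add (by rw [dist_comm]; exact hgx.1 s hs) (hyx s hs)
      _ ≤ ε := by linarith
  · rw [← hcard]
    exact Finset.card_image_le

lemma entOn_le_entOn_univ (hφ : IsFlowMap φ) (K : Set X) :
    entOn φ K ≤ entOn φ (Set.univ : Set X) := by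
  apply iSup₂_le
  intro ε hε
  refine le_trans ?_ (le_iSup₂ (f := fun (ε' : ℝ) (_ : 0 < ε') =>
    Filter.limsup (fun t : ℝ => ((Real.log (spanNum φ (Set.univ : Set X) t ε' : ℝ) / t : ℝ) : EReal))
      Filter.atTop) (ε / 3) (by positivity))
  refine Filter.limsup_le_limsup ?_
  filter_upwards [Filter.eventually_gt_atTop (0:ℝ)] with t ht
  apply EReal.coe_le_coe_iff.mpr
  have hlog : Real.log (spanNum φ K t ε : ℝ) ≤ Real.log (spanNum φ (Set.univ : Set X) t (ε/3) : ℝ) :=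
    log_nat_mono (spanNum_le_univ hφ K t hε)
  exact (div_le_div_iff_of_pos_right ht).mpr hlog

lemma hStar_le_entOn_univ (hφ : IsFlowMap φ) : hStar φ ≤ entOn φ (Set.univ : Set X) := by
  apply iSup_le
  intro K
  apply iSup_le
  intro hK
  apply iSup_le
  intro _
  exact entOn_le_entOn_univ hφ K

lemma singSet_closed (hφ : IsFlowMap φ) : IsClosed (SingSet φ) := by
  have : SingSet φ = ⋂ t : ℝ, {x : X | φ t x = x} := by
    ext x
    simp [SingSet, Set.mem_iInter]
  rw [this]
  apply isClosed_iInter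
  intro t
  exact isClosed_eq (hφ.1.comp (Continuous.prodMk_right t)) continuous_id

lemma wandering_window {z : X} (hz : z ∉ NonWandering φ) :
    ∃ V : Set X, IsOpen V ∧ z ∈ V ∧ ∃ C : ℝ, 0 < C ∧ ∀ a : ℝ, C ≤ a → φ a '' V ∩ V = ∅ := by
  simp only [NonWandering, Set.mem_setOf_eq] at hz
  push_neg at hz
  obtain ⟨U, hU, T, hT, hw⟩ := hz
  obtain ⟨V, hVU, hVopen, hzV⟩ := _root_.mem_nhds_iff.mp hU
  refine ⟨V, hVopen, hzV, T, hT, ?_⟩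
  intro a ha
  have h1 := hw a ha
  apply Set.eq_empty_of_subset_empty
  rw [← h1]
  exact Set.inter_subset_inter (Set.image_mono hVU) hVU

lemma visits_card_le {V : Set X} {C : ℝ} (hφ : IsFlowMap φ) (hC : 0 < C)
    (hw : ∀ a : ℝ, C ≤ a → φ a '' V ∩ V = ∅) {T : ℝ} (hT : 1 ≤ T) (x : X) (B : ℕ)
    (s : Finset (Fin B)) (hsV : ∀ j ∈ s, φ ((j : ℕ) * T) x ∈ V) :
    s.card ≤ ⌈C⌉₊ + 1 := by
  classical
  rcases Finset.eq_empty_or_nonempty s with he | hne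
  · rw [he]; simp
  set jm := s.min' hne with hjmdef
  have hjm : jm ∈ s := s.min'_mem hne
  have hjmV : φ ((jm : ℕ) * T) x ∈ V := hsV jm hjm
  have key : ∀ j ∈ s, (j : ℕ) < (jm : ℕ) + (⌈C⌉₊ + 1) := by
    intro j hj
    have hjV : φ ((j : ℕ) * T) x ∈ V := hsV j hj
    -- first show (j:ℕ) and (jm:ℕ) are within C of each other, in both orders
    have main : ∀ j1 j2 : Fin B, φ (j1 * T) x ∈ V → φ (j2 * T) x ∈ V → (j1:ℕ) ≤ (j2:ℕ) →
        ((j2 : ℕ) : ℝ) - ((j1 : ℕ) : ℝ) < C := by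
      intro j1 j2 h1 h2 hle
      by_contra hge
      push_neg at hge
      have hd : ((j2 : ℕ) : ℝ) * T - ((j1 : ℕ) : ℝ) * T ≥ C := by
        have h0 : ((j2 : ℕ) : ℝ) - ((j1 : ℕ) : ℝ) ≥ C := hge
        nlinarith [sub_nonneg.mpr (show ((j1:ℕ):ℝ) ≤ ((j2:ℕ):ℝ) by exact_mod_cast hle)]
      have hmem : φ ((j2:ℕ) * T) x ∈ φ (((j2:ℕ):ℝ) * T - ((j1:ℕ):ℝ) * T) '' V ∩ V := by
        constructor
        · refine ⟨φ ((j1:ℕ) * T) x, h1, ?_⟩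
          rw [← hφ.2.2]
          congr 1
          ring
        · exact h2
      rw [hw _ hd] at hmem
      exact hmem
    rcases le_or_gt (jm : ℕ) (j : ℕ) with hle | hlt
    · have := main jm j hjmV hjV hle
      have : ((j:ℕ):ℝ) < ((jm:ℕ):ℝ) + C := by linarith
      have hjc : ((j:ℕ) : ℝ) < ((jm:ℕ):ℝ) + (⌈C⌉₊:ℝ) := lt_of_lt_of_le this (by
        have := Nat.le_ceil C
        linarith)
      have h2 : ((j:ℕ) : ℝ) < (((jm:ℕ) + ⌈C⌉₊ + 1 : ℕ) : ℝ) := by push_cast; linarith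
      have h3 : (j:ℕ) < (jm:ℕ) + ⌈C⌉₊ + 1 := by exact_mod_cast h2
      omega
    · omega
  calc s.card ≤ (Finset.Ico (jm:ℕ) ((jm:ℕ) + (⌈C⌉₊ + 1))).card := by
        refine Finset.card_le_card_of_injOn (fun j => (j : ℕ)) ?_ ?_
        · intro j hj
          rw [Finset.mem_coe, Finset.mem_Ico]
          refine ⟨?_, key j hj⟩
          exact Fin.le_def.mp (s.min'_le j hj)
        · intro a _ b _ hab
          exact Fin.ext hab
    _ = ⌈C⌉₊ + 1 := by rw [Nat.card_Ico]; omega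

lemma compact_wandering_count (hφ : IsFlowMap φ) {Z : Set X} (hZc : IsCompact Z)
    (hZw : ∀ z ∈ Z, z ∉ NonWandering φ) :
    ∃ S : ℕ, ∀ T : ℝ, 1 ≤ T → ∀ x : X, ∀ B : ℕ, ∀ s : Finset (Fin B),
      (∀ j ∈ s, φ ((j : ℕ) * T) x ∈ Z) → s.card ≤ S := by
  classical
  have hch : ∀ z : X, z ∈ Z → ∃ V : Set X, IsOpen V ∧ z ∈ V ∧
      ∃ C : ℝ, 0 < C ∧ ∀ a : ℝ, C ≤ a → φ a '' V ∩ V = ∅ :=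
    fun z hz => wandering_window (hZw z hz)
  choose! V hVo hzV C hC hw using hch
  obtain ⟨b, hbZ, hbfin, hbcov⟩ := hZc.elim_finite_subcover_image
    (fun z hz => hVo z hz) (by
      intro z hz
      exact Set.mem_iUnion₂.mpr ⟨z, hz, hzV z hz⟩)
  refine ⟨∑ z ∈ hbfin.toFinset, (⌈C z⌉₊ + 1), ?_⟩
  intro T hT x B s hsZ
  have hsub : s ⊆
      hbfin.toFinset.biUnion (fun z => Finset.univ.filter
        (fun j : Fin B => φ ((j : ℕ) * T) x ∈ V z)) := by
    intro j hj
    obtain ⟨z, hz, hmem⟩ := Set.mem_iUnion₂.mp (hbcov (hsZ j hj))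
    rw [Finset.mem_biUnion]
    exact ⟨z, hbfin.mem_toFinset.mpr hz, Finset.mem_filter.mpr ⟨Finset.mem_univ _, hmem⟩⟩
  calc s.card
      ≤ (hbfin.toFinset.biUnion (fun z => Finset.univ.filter
          (fun j : Fin B => φ ((j : ℕ) * T) x ∈ V z))).card := Finset.card_le_card hsub
    _ ≤ ∑ z ∈ hbfin.toFinset, (Finset.univ.filter
          (fun j : Fin B => φ ((j : ℕ) * T) x ∈ V z)).card := Finset.card_biUnion_le
    _ ≤ ∑ z ∈ hbfin.toFinset, (⌈C z⌉₊ + 1) := by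
        apply Finset.sum_le_sum
        intro z hz
        have hzZ : z ∈ Z := hbZ (hbfin.mem_toFinset.mp hz)
        exact visits_card_le hφ (hC z hzZ) (hw z hzZ) hT x B _
          (fun j hj => (Finset.mem_filter.mp hj).2)

lemma slow_radius (hφ : IsFlowMap φ) (hS : (SingSet φ).Nonempty) (T η : ℝ) (hη : 0 < η) :
    ∃ σ > (0:ℝ), ∀ x : X, Metric.infDist x (SingSet φ) < σ →
      ∀ u ∈ Set.Icc (0:ℝ) T, dist (φ u x) x ≤ η := by
  obtain ⟨δ, hδ, H⟩ := flow_uc hφ T (η/2) (by positivity)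
  refine ⟨min δ (η/2), by positivity, ?_⟩
  intro x hx u hu
  obtain ⟨p, hpS, hp⟩ := (Metric.infDist_lt_iff hS).mp hx
  have h1 := H x p (le_of_lt (lt_of_lt_of_le hp (min_le_left _ _))) u hu
  have h2 : φ u p = p := hpS u
  calc dist (φ u x) x ≤ dist (φ u x) (φ u p) + dist (φ u p) x := dist_triangle _ _ _
    _ ≤ η/2 + η/2 := add_le_add h1 (by
          rw [h2, dist_comm]
          exact le_of_lt (lt_of_lt_of_le hp (min_le_right _ _)))
    _ = η := by ring

lemma sigma0_exists (hφ : IsFlowMap φ) (hS : (SingSet φ).Nonempty)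
    (h : IsClosed (NonWandering φ \ SingSet φ)) :
    ∃ σ₀ > (0:ℝ), ∀ z : X, 0 < Metric.infDist z (SingSet φ) →
      Metric.infDist z (SingSet φ) ≤ σ₀ → z ∉ NonWandering φ := by
  classical
  have hdecomp : ∀ z : X, z ∈ NonWandering φ → z ∉ SingSet φ → z ∈ NonWandering φ \ SingSet φ :=
    fun z h1 h2 => ⟨h1, h2⟩
  rcases Set.eq_empty_or_nonempty (NonWandering φ \ SingSet φ) with hW | hWne
  · refine ⟨1, one_pos, ?_⟩
    intro z hz1 _ hzNW
    have hzS : z ∉ SingSet φ := by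
      intro hmem
      rw [Metric.infDist_zero_of_mem hmem] at hz1
      exact lt_irrefl _ hz1
    have : z ∈ NonWandering φ \ SingSet φ := ⟨hzNW, hzS⟩
    rw [hW] at this
    exact this
  · have hWc : IsCompact (NonWandering φ \ SingSet φ) := h.isCompact
    obtain ⟨w₀, hw₀, hmin'⟩ := hWc.exists_isMinOn hWne
      ((Metric.continuous_infDist_pt (SingSet φ)).continuousOn)
    have hmin : ∀ y ∈ NonWandering φ \ SingSet φ,
        Metric.infDist w₀ (SingSet φ) ≤ Metric.infDist y (SingSet φ) := fun y hy => hmin' hy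
    have hm : 0 < Metric.infDist w₀ (SingSet φ) :=
      ((singSet_closed hφ).notMem_iff_infDist_pos hS).mp hw₀.2
    refine ⟨Metric.infDist w₀ (SingSet φ) / 2, by positivity, ?_⟩
    intro z hz1 hz2 hzNW
    have hzS : z ∉ SingSet φ := by
      intro hmem
      rw [Metric.infDist_zero_of_mem hmem] at hz1
      exact lt_irrefl _ hz1
    have := hmin z ⟨hzNW, hzS⟩
    linarith

set_option maxHeartbeats 1600000 in
set_option synthInstance.maxHeartbeats 400000 in
/-- The master counting bound: for a fixed time scale `T`, spanning numbers of the whole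
space are controlled by spanning numbers of the compact set away from the singularities. -/
lemma master_bound (hφ : IsFlowMap φ) (hS : (SingSet φ).Nonempty)
    {σ₀ : ℝ} (hσ₀ : 0 < σ₀)
    (hσw : ∀ z : X, 0 < Metric.infDist z (SingSet φ) →
      Metric.infDist z (SingSet φ) ≤ σ₀ → z ∉ NonWandering φ)
    {ε' : ℝ} (hε' : 0 < ε')
    {N : ℕ} {eD : Fin N → X} {δD : ℝ}
    (hDnet : ∀ x : X, ∃ i, dist x (eD i) ≤ δD)
    (hδD1 : ∀ x y : X, dist x y ≤ 2 * δD → ∀ v ∈ Set.Icc (0:ℝ) 1, dist (φ v x) (φ v y) ≤ ε')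
    (hδD2 : δD ≤ ε' / 8)
    (T : ℝ) (hT : 1 ≤ T) :
    ∃ S : ℕ, ∀ t : ℝ, 1 ≤ t →
      spanNum φ (Set.univ : Set X) t ε' ≤
        ((spanNum φ {x : X | σ₀ ≤ Metric.infDist x (SingSet φ)} T (ε'/2) + N + 2) * 2) ^ (⌈t/T⌉₊)
          * (N ^ (⌈T⌉₊)) ^ S := by
  classical
  have hT0 : (0:ℝ) < T := lt_of_lt_of_le one_pos hT
  set Sing := SingSet φ with hSing
  set A : Set X := {x : X | σ₀ ≤ Metric.infDist x Sing} with hA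
  have hAc : IsCompact A := by
    apply IsClosed.isCompact
    have : A = (fun x => Metric.infDist x Sing) ⁻¹' (Set.Ici σ₀) := rfl
    rw [this]
    exact isClosed_Ici.preimage (Metric.continuous_infDist_pt Sing)
  -- slow radius
  obtain ⟨σT, hσT, hslow⟩ := slow_radius hφ hS T (ε'/4) (by positivity)
  -- the annulus
  set Z : Set X := {x : X | σT ≤ Metric.infDist x Sing ∧ Metric.infDist x Sing ≤ σ₀} with hZ
  have hZc : IsCompact Z := by
    apply IsClosed.isCompact
    have : Z = ((fun x => Metric.infDist x Sing) ⁻¹' (Set.Ici σT)) ∩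
        ((fun x => Metric.infDist x Sing) ⁻¹' (Set.Iic σ₀)) := rfl
    rw [this]
    exact IsClosed.inter (isClosed_Ici.preimage (Metric.continuous_infDist_pt Sing))
      (isClosed_Iic.preimage (Metric.continuous_infDist_pt Sing))
  have hZw : ∀ z ∈ Z, z ∉ NonWandering φ := by
    intro z hz
    exact hσw z (lt_of_lt_of_le hσT hz.1) hz.2
  obtain ⟨S, hScount⟩ := compact_wandering_count hφ hZc hZw
  refine ⟨S, ?_⟩
  intro t ht
  -- the spanning family of A at time scale T
  obtain ⟨FA, hFA_sub, hFA_card, hFA_cov⟩ := spanNum_mem hφ hAc T (by positivity : (0:ℝ) < ε'/2)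
  set r := spanNum φ A T (ε'/2) with hrdef
  have hN : 0 < N := by
    obtain ⟨x₀⟩ : Nonempty X := ⟨hS.choose⟩
    obtain ⟨i, -⟩ := hDnet x₀
    exact i.pos
  set B := ⌈t/T⌉₊ with hBdef
  have hB : 0 < B := Nat.ceil_pos.mpr (by positivity)
  set Tc := ⌈T⌉₊ with hTcdef
  have hTc : 0 < Tc := Nat.ceil_pos.mpr hT0
  -- decoding / coding helpers
  set eA : Fin (FA.card + 1) → X := fun i =>
    if h : (i : ℕ) < FA.card then ↑(FA.equivFin.symm ⟨(i : ℕ), h⟩) else hS.choose with heA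
  set cA : X → Fin (FA.card + 1) := fun y =>
    if h : ∃ x, x ∈ FA ∧ ∀ s ∈ Set.Icc (0:ℝ) T, dist (φ s x) (φ s y) ≤ ε'/2
    then ⟨(FA.equivFin ⟨h.choose, h.choose_spec.1⟩ : ℕ), by omega⟩
    else ⟨FA.card, by omega⟩ with hcA
  have hcA_spec : ∀ y ∈ A, ∀ s ∈ Set.Icc (0:ℝ) T, dist (φ s (eA (cA y))) (φ s y) ≤ ε'/2 := by
    intro y hy
    obtain ⟨x, hx, hyx⟩ := Set.mem_iUnion₂.mp (hFA_cov hy)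
    have hex : ∃ x, x ∈ FA ∧ ∀ s ∈ Set.Icc (0:ℝ) T, dist (φ s x) (φ s y) ≤ ε'/2 := ⟨x, hx, hyx⟩
    intro s hs
    have : eA (cA y) = hex.choose := by
      simp only [hcA, heA, dif_pos hex]
      have hlt : ((⟨(FA.equivFin ⟨hex.choose, hex.choose_spec.1⟩ : ℕ), by omega⟩ :
          Fin (FA.card + 1)) : ℕ) < FA.card := (FA.equivFin ⟨hex.choose, hex.choose_spec.1⟩).isLt
      rw [dif_pos hlt]
      have h1 : (⟨((⟨(FA.equivFin ⟨hex.choose, hex.choose_spec.1⟩ : ℕ), by omega⟩ :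
          Fin (FA.card + 1)) : ℕ), hlt⟩ : Fin FA.card) =
          FA.equivFin ⟨hex.choose, hex.choose_spec.1⟩ := Fin.ext rfl
      rw [h1, Equiv.symm_apply_apply]
    rw [this]
    exact hex.choose_spec.2 s hs
  set cD : X → Fin N := fun y => (hDnet y).choose with hcDdef
  have hcD : ∀ y : X, dist y (eD (cD y)) ≤ δD := fun y => (hDnet y).choose_spec
  -- the coding maps
  set code1 : X → Fin B → (Fin (FA.card + 1) ⊕ (Fin N ⊕ Unit)) := fun x j =>
    if σ₀ ≤ Metric.infDist (φ ((j : ℕ) * T) x) Sing then Sum.inl (cA (φ ((j : ℕ) * T) x))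
    else if Metric.infDist (φ ((j : ℕ) * T) x) Sing < σT then
      Sum.inr (Sum.inl (cD (φ ((j : ℕ) * T) x)))
    else Sum.inr (Sum.inr ()) with hcode1
  set codeJ : X → Finset (Fin B) := fun x =>
    Finset.univ.filter (fun j => code1 x j = Sum.inr (Sum.inr ())) with hcodeJ
  set F3 : Finset (Fin B) → X → Fin S → Fin Tc → Fin N := fun J x p k =>
    if h : (p : ℕ) < J.card then
      cD (φ ((((J.orderIsoOfFin rfl ⟨(p : ℕ), h⟩ : {j // j ∈ J}) : Fin B) : ℕ) * T + (k : ℕ)) x)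
    else cD x with hF3
  set code : X → (Fin B → (Fin (FA.card + 1) ⊕ (Fin N ⊕ Unit))) × Finset (Fin B) ×
      (Fin S → Fin Tc → Fin N) := fun x => (code1 x, codeJ x, F3 (codeJ x) x) with hcode
  -- membership of annulus blocks in Z
  have hannZ : ∀ x : X, ∀ j : Fin B, code1 x j = Sum.inr (Sum.inr ()) →
      φ ((j : ℕ) * T) x ∈ Z := by
    intro x j hj
    simp only [hcode1] at hj
    by_cases h1 : σ₀ ≤ Metric.infDist (φ ((j : ℕ) * T) x) Sing
    · rw [if_pos h1] at hj
      exact absurd hj (by simp)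
    by_cases h2 : Metric.infDist (φ ((j : ℕ) * T) x) Sing < σT
    · rw [if_neg h1, if_pos h2] at hj
      exact absurd hj (by simp)
    · exact ⟨le_of_not_gt h2, le_of_not_ge h1⟩
  have hJcard : ∀ x : X, (codeJ x).card ≤ S := by
    intro x
    refine hScount T hT x B (codeJ x) ?_
    intro j hj
    simp only [hcodeJ, Finset.mem_filter] at hj
    exact hannZ x j hj.2
  -- every time `s ∈ [0,t]` lies in some block `[jT, jT+T]`
  have hcover : ∀ s : ℝ, s ∈ Set.Icc (0:ℝ) t → ∃ j : Fin B,
      ((j : ℕ) : ℝ) * T ≤ s ∧ s ≤ ((j : ℕ) : ℝ) * T + T := by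
    intro s hs
    have hsT : 0 ≤ s / T := div_nonneg hs.1 (le_of_lt hT0)
    have hj0B : min ⌊s/T⌋₊ (B - 1) < B := lt_of_le_of_lt (min_le_right _ _) (by omega)
    refine ⟨⟨min ⌊s/T⌋₊ (B - 1), hj0B⟩, ?_, ?_⟩
    · have h1 : ((min ⌊s/T⌋₊ (B - 1) : ℕ) : ℝ) ≤ (⌊s/T⌋₊ : ℝ) := by
        exact_mod_cast min_le_left _ _
      have h2 : (⌊s/T⌋₊ : ℝ) ≤ s / T := Nat.floor_le hsT
      calc ((min ⌊s/T⌋₊ (B - 1) : ℕ) : ℝ) * T ≤ (s/T) * T := by nlinarith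
        _ = s := div_mul_cancel₀ s (ne_of_gt hT0)
    · show s ≤ ((min ⌊s/T⌋₊ (B - 1) : ℕ) : ℝ) * T + T
      rcases le_or_gt ⌊s/T⌋₊ (B-1) with hcase | hcase
      · have he : min ⌊s/T⌋₊ (B - 1) = ⌊s/T⌋₊ := min_eq_left hcase
        have h3 : s / T < (⌊s/T⌋₊ : ℝ) + 1 := Nat.lt_floor_add_one _
        have h4 : s < ((⌊s/T⌋₊:ℝ) + 1) * T := by
          calc s = (s/T)*T := (div_mul_cancel₀ s (ne_of_gt hT0)).symm
            _ < _ := by nlinarith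
        rw [he]
        nlinarith
      · have hj0e : min ⌊s/T⌋₊ (B - 1) = B - 1 := min_eq_right (le_of_lt hcase)
        have hBT : t ≤ (B:ℝ) * T := by
          have h5 : t / T ≤ (B : ℝ) := by
            rw [hBdef]
            exact Nat.le_ceil _
          calc t = (t/T)*T := (div_mul_cancel₀ t (ne_of_gt hT0)).symm
            _ ≤ (B:ℝ)*T := by nlinarith
        have hcast : ((min ⌊s/T⌋₊ (B - 1) : ℕ) : ℝ) = (B:ℝ) - 1 := by
          rw [hj0e]
          exact_mod_cast Nat.cast_sub (by omega)
        rw [hcast]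
        have := hs.2
        nlinarith
  -- fibers of the coding map are contained in Bowen balls
  have hfiber : ∀ x y : X, code x = code y → ∀ s ∈ Set.Icc (0:ℝ) t,
      dist (φ s x) (φ s y) ≤ ε' := by
    intro x y hcxy s hs
    obtain ⟨j, hj1, hj2⟩ := hcover s hs
    have hu : s - ((j : ℕ) : ℝ) * T ∈ Set.Icc (0:ℝ) T := ⟨by linarith, by linarith⟩
    have hphiz : ∀ z : X, φ s z = φ (s - ((j : ℕ) : ℝ) * T) (φ (((j : ℕ) : ℝ) * T) z) := by
      intro z
      rw [← hφ.2.2]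
      congr 1
      ring
    have h1j : code1 x j = code1 y j := by
      have h1 : code1 x = code1 y := congrArg Prod.fst hcxy
      rw [h1]
    have hJ : codeJ x = codeJ y := congrArg (fun p => p.2.1) hcxy
    have h3 : F3 (codeJ x) x = F3 (codeJ x) y := by
      have h3' : F3 (codeJ x) x = F3 (codeJ y) y := congrArg (fun p => p.2.2) hcxy
      rw [← hJ] at h3'
      exact h3'
    by_cases c1x : σ₀ ≤ Metric.infDist (φ (((j : ℕ) : ℝ) * T) x) Sing
    · -- x is deep in A at block start
      have hx1 : code1 x j = Sum.inl (cA (φ (((j : ℕ) : ℝ) * T) x)) := by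
        simp only [hcode1]
        rw [if_pos c1x]
      by_cases c1y : σ₀ ≤ Metric.infDist (φ (((j : ℕ) : ℝ) * T) y) Sing
      · have hy1 : code1 y j = Sum.inl (cA (φ (((j : ℕ) : ℝ) * T) y)) := by
          simp only [hcode1]
          rw [if_pos c1y]
        have hAeq : cA (φ (((j : ℕ) : ℝ) * T) x) = cA (φ (((j : ℕ) : ℝ) * T) y) := by
          have := h1j
          rw [hx1, hy1] at this
          exact Sum.inl.inj this
        have htrx := hcA_spec (φ (((j : ℕ) : ℝ) * T) x) c1x _ hu
        have htry := hcA_spec (φ (((j : ℕ) : ℝ) * T) y) c1y _ hu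
        rw [hphiz x, hphiz y]
        calc dist (φ (s - ((j : ℕ) : ℝ) * T) (φ (((j : ℕ) : ℝ) * T) x))
              (φ (s - ((j : ℕ) : ℝ) * T) (φ (((j : ℕ) : ℝ) * T) y))
            ≤ dist (φ (s - ((j : ℕ) : ℝ) * T) (φ (((j : ℕ) : ℝ) * T) x))
                (φ (s - ((j : ℕ) : ℝ) * T) (eA (cA (φ (((j : ℕ) : ℝ) * T) x)))) +
              dist (φ (s - ((j : ℕ) : ℝ) * T) (eA (cA (φ (((j : ℕ) : ℝ) * T) x))))
                (φ (s - ((j : ℕ) : ℝ) * T) (φ (((j : ℕ) : ℝ) * T) y)) := dist_triangle _ _ _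
          _ ≤ ε'/2 + ε'/2 := by
              apply add_le_add
              · rw [dist_comm]
                exact htrx
              · rw [hAeq]
                exact htry
          _ = ε' := by ring
      · -- impossible: codes differ
        exfalso
        have hy1 : ∃ w, code1 y j = Sum.inr w := by
          simp only [hcode1]
          rw [if_neg c1y]
          by_cases c2y : Metric.infDist (φ (((j : ℕ) : ℝ) * T) y) Sing < σT
          · rw [if_pos c2y]; exact ⟨_, rfl⟩
          · rw [if_neg c2y]; exact ⟨_, rfl⟩
        obtain ⟨w, hw⟩ := hy1
        rw [hx1, hw] at h1j
        exact Sum.inl_ne_inr h1j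
    · by_cases c2x : Metric.infDist (φ (((j : ℕ) : ℝ) * T) x) Sing < σT
      · -- slow block
        have hx1 : code1 x j = Sum.inr (Sum.inl (cD (φ (((j : ℕ) : ℝ) * T) x))) := by
          simp only [hcode1]
          rw [if_neg c1x, if_pos c2x]
        by_cases c1y : σ₀ ≤ Metric.infDist (φ (((j : ℕ) : ℝ) * T) y) Sing
        · exfalso
          have hy1 : code1 y j = Sum.inl (cA (φ (((j : ℕ) : ℝ) * T) y)) := by
            simp only [hcode1]
            rw [if_pos c1y]
          rw [hx1, hy1] at h1j
          exact Sum.inr_ne_inl h1j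
        by_cases c2y : Metric.infDist (φ (((j : ℕ) : ℝ) * T) y) Sing < σT
        · have hy1 : code1 y j = Sum.inr (Sum.inl (cD (φ (((j : ℕ) : ℝ) * T) y))) := by
            simp only [hcode1]
            rw [if_neg c1y, if_pos c2y]
          have hDeq : cD (φ (((j : ℕ) : ℝ) * T) x) = cD (φ (((j : ℕ) : ℝ) * T) y) := by
            have := h1j
            rw [hx1, hy1] at this
            exact Sum.inl.inj (Sum.inr.inj this)
          have hsx := hslow (φ (((j : ℕ) : ℝ) * T) x) c2x _ hu
          have hsy := hslow (φ (((j : ℕ) : ℝ) * T) y) c2y _ hu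
          have hdx := hcD (φ (((j : ℕ) : ℝ) * T) x)
          have hdy := hcD (φ (((j : ℕ) : ℝ) * T) y)
          rw [hDeq] at hdx
          have hmid : dist (φ (((j : ℕ) : ℝ) * T) x) (φ (((j : ℕ) : ℝ) * T) y) ≤ 2 * δD := by
            calc dist (φ (((j : ℕ) : ℝ) * T) x) (φ (((j : ℕ) : ℝ) * T) y)
                ≤ dist (φ (((j : ℕ) : ℝ) * T) x) (eD (cD (φ (((j : ℕ) : ℝ) * T) y))) +
                  dist (eD (cD (φ (((j : ℕ) : ℝ) * T) y))) (φ (((j : ℕ) : ℝ) * T) y) :=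
                  dist_triangle _ _ _
              _ ≤ δD + δD := add_le_add hdx (by rw [dist_comm]; exact hdy)
              _ = 2 * δD := by ring
          rw [hphiz x, hphiz y]
          calc dist (φ (s - ((j : ℕ) : ℝ) * T) (φ (((j : ℕ) : ℝ) * T) x))
                (φ (s - ((j : ℕ) : ℝ) * T) (φ (((j : ℕ) : ℝ) * T) y))
              ≤ dist (φ (s - ((j : ℕ) : ℝ) * T) (φ (((j : ℕ) : ℝ) * T) x))
                  (φ (((j : ℕ) : ℝ) * T) x) +
                (dist (φ (((j : ℕ) : ℝ) * T) x) (φ (((j : ℕ) : ℝ) * T) y) +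
                 dist (φ (((j : ℕ) : ℝ) * T) y)
                   (φ (s - ((j : ℕ) : ℝ) * T) (φ (((j : ℕ) : ℝ) * T) y))) := by
                  rw [← add_assoc]
                  exact dist_triangle4 _ _ _ _
            _ ≤ ε'/4 + (2*δD + ε'/4) := by
                apply add_le_add hsx
                apply add_le_add hmid
                rw [dist_comm]
                exact hsy
            _ ≤ ε'/4 + (2*(ε'/8) + ε'/4) := by linarith
            _ ≤ ε' := by linarith
        · exfalso
          have hy1 : code1 y j = Sum.inr (Sum.inr ()) := by
            simp only [hcode1]
            rw [if_neg c1y, if_neg c2y]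
          rw [hx1, hy1] at h1j
          exact Sum.inl_ne_inr (Sum.inr.inj h1j)
      · -- annulus block
        have hx1 : code1 x j = Sum.inr (Sum.inr ()) := by
          simp only [hcode1]
          rw [if_neg c1x, if_neg c2x]
        have hmemx : j ∈ codeJ x := by
          simp only [hcodeJ, Finset.mem_filter]
          exact ⟨Finset.mem_univ _, hx1⟩
        have hcardS : (codeJ x).card ≤ S := hJcard x
        set p' : Fin (codeJ x).card := ((codeJ x).orderIsoOfFin rfl).symm ⟨j, hmemx⟩ with hp'
        have hpS : (p' : ℕ) < S := lt_of_lt_of_le p'.isLt hcardS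
        -- the sub-block index
        have hu0 : (0:ℝ) ≤ s - ((j : ℕ) : ℝ) * T := hu.1
        have hk0 : min ⌊s - ((j : ℕ) : ℝ) * T⌋₊ (Tc - 1) < Tc :=
          lt_of_le_of_lt (min_le_right _ _) (by omega)
        set k0 : ℕ := min ⌊s - ((j : ℕ) : ℝ) * T⌋₊ (Tc - 1) with hk0def
        have hkle : (k0 : ℝ) ≤ s - ((j : ℕ) : ℝ) * T := by
          have h1 : ((k0 : ℕ) : ℝ) ≤ (⌊s - ((j : ℕ) : ℝ) * T⌋₊ : ℝ) := by
            exact_mod_cast min_le_left _ _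
          exact le_trans h1 (Nat.floor_le hu0)
        have hkv : s - ((j : ℕ) : ℝ) * T - (k0:ℝ) ≤ 1 := by
          rcases le_or_gt ⌊s - ((j : ℕ) : ℝ) * T⌋₊ (Tc - 1) with hcase | hcase
          · have he : k0 = ⌊s - ((j : ℕ) : ℝ) * T⌋₊ := min_eq_left hcase
            have h3 : s - ((j : ℕ) : ℝ) * T < (⌊s - ((j : ℕ) : ℝ) * T⌋₊ : ℝ) + 1 :=
              Nat.lt_floor_add_one _
            rw [he]
            linarith
          · have he : k0 = Tc - 1 := min_eq_right (le_of_lt hcase)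
            have hTTc : T ≤ (Tc : ℝ) := Nat.le_ceil T
            have hcast : ((k0 : ℕ) : ℝ) = (Tc:ℝ) - 1 := by
              rw [he]
              exact_mod_cast Nat.cast_sub (by omega)
            rw [hcast]
            have := hu.2
            linarith
        have hvmem : s - ((j : ℕ) : ℝ) * T - (k0:ℝ) ∈ Set.Icc (0:ℝ) 1 := ⟨by linarith, hkv⟩
        -- evaluate the third component
        have hev : ∀ z : X, F3 (codeJ x) z ⟨(p' : ℕ), hpS⟩ ⟨k0, hk0⟩ =
            cD (φ (((j : ℕ) : ℝ) * T + (k0:ℝ)) z) := by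
          intro z
          have harg : ∀ hh : ((p' : ℕ) < (codeJ x).card),
              ((((codeJ x).orderIsoOfFin rfl) ⟨(p' : ℕ), hh⟩ : {i // i ∈ codeJ x})
                : Fin B) = j := by
            intro hh
            have h1 : (⟨(p' : ℕ), hh⟩ : Fin (codeJ x).card) = p' := Fin.ext rfl
            rw [h1, hp', OrderIso.apply_symm_apply]
          simp only [hF3]
          rw [dif_pos (show ((⟨(p' : ℕ), hpS⟩ : Fin S) : ℕ) < (codeJ x).card from p'.isLt)]
          rw [harg]
        have h3' := congrFun (congrFun h3 (⟨(p' : ℕ), hpS⟩ : Fin S)) (⟨k0, hk0⟩ : Fin Tc)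
        rw [hev x, hev y] at h3'
        have hdx := hcD (φ (((j : ℕ) : ℝ) * T + (k0:ℝ)) x)
        have hdy := hcD (φ (((j : ℕ) : ℝ) * T + (k0:ℝ)) y)
        rw [h3'] at hdx
        have hdd : dist (φ (((j : ℕ) : ℝ) * T + (k0:ℝ)) x)
            (φ (((j : ℕ) : ℝ) * T + (k0:ℝ)) y) ≤ 2 * δD := by
          calc dist (φ (((j : ℕ) : ℝ) * T + (k0:ℝ)) x) (φ (((j : ℕ) : ℝ) * T + (k0:ℝ)) y)
              ≤ dist (φ (((j : ℕ) : ℝ) * T + (k0:ℝ)) x)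
                  (eD (cD (φ (((j : ℕ) : ℝ) * T + (k0:ℝ)) y))) +
                dist (eD (cD (φ (((j : ℕ) : ℝ) * T + (k0:ℝ)) y)))
                  (φ (((j : ℕ) : ℝ) * T + (k0:ℝ)) y) := dist_triangle _ _ _
            _ ≤ δD + δD := add_le_add hdx (by rw [dist_comm]; exact hdy)
            _ = 2 * δD := by ring
        have htr := hδD1 _ _ hdd _ hvmem
        have hrw : ∀ z : X, φ (s - ((j : ℕ) : ℝ) * T - (k0:ℝ))
            (φ (((j : ℕ) : ℝ) * T + (k0:ℝ)) z) = φ s z := by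
          intro z
          rw [← hφ.2.2]
          congr 1
          ring
        rw [hrw x, hrw y] at htr
        exact htr
  -- now choose one representative per fiber of the coding map
  have hXne : Nonempty X := ⟨hS.choose⟩
  haveI : Nonempty ((Fin B → (Fin (FA.card + 1) ⊕ (Fin N ⊕ Unit))) × Finset (Fin B) ×
      (Fin S → Fin Tc → Fin N)) := ⟨code hS.choose⟩
  set pick : (Fin B → (Fin (FA.card + 1) ⊕ (Fin N ⊕ Unit))) × Finset (Fin B) ×
      (Fin S → Fin Tc → Fin N) → X := fun g =>
    if h : ∃ x : X, code x = g then h.choose else hS.choose with hpick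
  have hcovF : Set.univ ⊆ ⋃ x ∈ Finset.image pick Finset.univ,
      {y : X | ∀ s ∈ Set.Icc (0:ℝ) t, dist (φ s x) (φ s y) ≤ ε'} := by
    intro y _
    have hex : ∃ x : X, code x = code y := ⟨y, rfl⟩
    refine Set.mem_iUnion₂.mpr ⟨pick (code y),
      Finset.mem_image_of_mem pick (Finset.mem_univ _), ?_⟩
    have hpc : code (pick (code y)) = code y := by
      simp only [hpick, dif_pos hex]
      exact hex.choose_spec
    exact hfiber _ y hpc
  refine le_trans (spanNum_le_card φ (fun _ _ => Set.mem_univ _) hcovF) ?_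
  calc (Finset.image pick Finset.univ).card
      ≤ Fintype.card ((Fin B → (Fin (FA.card + 1) ⊕ (Fin N ⊕ Unit))) × Finset (Fin B) ×
          (Fin S → Fin Tc → Fin N)) := le_trans Finset.card_image_le (le_of_eq (Finset.card_univ))
    _ = ((FA.card + 1) + (N + 1)) ^ B * (2 ^ B * ((N ^ Tc) ^ S)) := by
        simp [Fintype.card_prod, Fintype.card_fun, Fintype.card_sum, Fintype.card_finset]
    _ = ((FA.card + N + 2) * 2) ^ B * (N ^ Tc) ^ S := by
        rw [mul_pow]
        ring_nf
    _ = ((r + N + 2) * 2) ^ B * (N ^ Tc) ^ S := by rw [hFA_card]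

/-- From a counting bound of the form `f t ≤ C1 ^ ⌈t/T⌉₊ * C2` one gets a limsup bound. -/
lemma limsup_log_div_le {f : ℝ → ℕ} {C1 C2 : ℕ} (hC1 : 1 ≤ C1) (hC2 : 1 ≤ C2)
    {T : ℝ} (hT : 1 ≤ T) (hb : ∀ t : ℝ, 1 ≤ t → f t ≤ C1 ^ (⌈t/T⌉₊) * C2) :
    Filter.limsup (fun t : ℝ => ((Real.log (f t : ℝ) / t : ℝ) : EReal)) Filter.atTop ≤
      ((Real.log C1 / T : ℝ) : EReal) := by
  have hT0 : (0:ℝ) < T := lt_of_lt_of_le one_pos hT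
  have hlc1 : 0 ≤ Real.log C1 := Real.log_natCast_nonneg C1
  have hlc2 : 0 ≤ Real.log C2 := Real.log_natCast_nonneg C2
  apply limsup_coe_le
  intro η hη
  filter_upwards [Filter.eventually_ge_atTop (max 1 ((Real.log C1 + Real.log C2) / η))] with t htt
  have ht1 : (1:ℝ) ≤ t := le_trans (le_max_left _ _) htt
  have ht0 : (0:ℝ) < t := lt_of_lt_of_le one_pos ht1
  have hB : (⌈t/T⌉₊ : ℝ) ≤ t / T + 1 := le_of_lt (Nat.ceil_lt_add_one (by positivity))
  have hlog : Real.log (f t : ℝ) ≤ (⌈t/T⌉₊ : ℝ) * Real.log C1 + Real.log C2 := by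
    have h1 : Real.log (f t : ℝ) ≤ Real.log ((C1 ^ (⌈t/T⌉₊) * C2 : ℕ) : ℝ) :=
      log_nat_mono (hb t ht1)
    refine le_trans h1 (le_of_eq ?_)
    push_cast
    rw [Real.log_mul (by positivity) (by positivity), Real.log_pow]
  have hfinal : (⌈t/T⌉₊ : ℝ) * Real.log C1 + Real.log C2 ≤
      (Real.log C1 / T) * t + (Real.log C1 + Real.log C2) := by
    have h2 : (⌈t/T⌉₊ : ℝ) * Real.log C1 ≤ (t / T + 1) * Real.log C1 :=
      mul_le_mul_of_nonneg_right hB hlc1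
    have h3 : (t / T + 1) * Real.log C1 = (Real.log C1 / T) * t + Real.log C1 := by
      field_simp
    linarith
  have hdiv : Real.log (f t : ℝ) / t ≤ Real.log C1 / T + (Real.log C1 + Real.log C2) / t := by
    calc Real.log (f t : ℝ) / t
        ≤ ((Real.log C1 / T) * t + (Real.log C1 + Real.log C2)) / t :=
          (div_le_div_iff_of_pos_right ht0).mpr (le_trans hlog hfinal)
      _ = Real.log C1 / T + (Real.log C1 + Real.log C2) / t := by
          field_simp
  have hsmall : (Real.log C1 + Real.log C2) / t ≤ η := by
    rw [div_le_iff₀ ht0]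
    have := le_trans (le_max_right 1 ((Real.log C1 + Real.log C2) / η)) htt
    rw [div_le_iff₀ hη] at this
    nlinarith
  linarith

lemma entOn_le_hStar {K : Set X} (hK : IsCompact K) (hsub : K ⊆ (SingSet φ)ᶜ) :
    entOn φ K ≤ hStar φ := by
  calc entOn φ K = ⨆ (_ : IsCompact K) (_ : K ⊆ (SingSet φ)ᶜ), entOn φ K := by
        rw [iSup_pos hK, iSup_pos hsub]
    _ ≤ hStar φ := le_iSup (fun K => ⨆ (_ : IsCompact K) (_ : K ⊆ (SingSet φ)ᶜ), entOn φ K) K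

set_option maxHeartbeats 1600000 in
lemma entOn_univ_le_hStar (hφ : IsFlowMap φ) (hS : (SingSet φ).Nonempty)
    (h : IsClosed (NonWandering φ \ SingSet φ)) :
    entOn φ (Set.univ : Set X) ≤ hStar φ := by
  classical
  obtain ⟨σ₀, hσ₀, hσw⟩ := sigma0_exists hφ hS h
  have hAc : IsCompact {x : X | σ₀ ≤ Metric.infDist x (SingSet φ)} := by
    apply IsClosed.isCompact
    have : {x : X | σ₀ ≤ Metric.infDist x (SingSet φ)} =
        (fun x => Metric.infDist x (SingSet φ)) ⁻¹' (Set.Ici σ₀) := rfl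
    rw [this]
    exact isClosed_Ici.preimage (Metric.continuous_infDist_pt _)
  have hAsub : {x : X | σ₀ ≤ Metric.infDist x (SingSet φ)} ⊆ (SingSet φ)ᶜ := by
    intro x hx hxS
    rw [Set.mem_setOf_eq, Metric.infDist_zero_of_mem hxS] at hx
    exact absurd (lt_of_lt_of_le hσ₀ hx) (lt_irrefl _)
  have hAH : entOn φ {x : X | σ₀ ≤ Metric.infDist x (SingSet φ)} ≤ hStar φ :=
    entOn_le_hStar hAc hAsub
  apply iSup₂_le
  intro ε' hε'
  -- build the finite net data
  obtain ⟨δ₁, hδ₁, H1⟩ := flow_uc hφ 1 ε' hε'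
  have hδD0 : 0 < min (δ₁/2) (ε'/8) := lt_min (by positivity) (by positivity)
  obtain ⟨FD, -, hFDcov⟩ := exists_net_subset (isCompact_univ : IsCompact (Set.univ : Set X)) hδD0
  have hDnet : ∀ x : X, ∃ i : Fin FD.card,
      dist x ((fun i => (↑(FD.equivFin.symm i) : X)) i) ≤ min (δ₁/2) (ε'/8) := by
    intro x
    obtain ⟨c, hc, hxc⟩ := Set.mem_iUnion₂.mp (hFDcov (Set.mem_univ x))
    refine ⟨FD.equivFin ⟨c, hc⟩, ?_⟩
    have he : (↑(FD.equivFin.symm (FD.equivFin ⟨c, hc⟩)) : X) = c := by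
      rw [Equiv.symm_apply_apply]
    simp only [he]
    exact le_of_lt (Metric.mem_ball.mp hxc)
  have hδD1 : ∀ x y : X, dist x y ≤ 2 * min (δ₁/2) (ε'/8) →
      ∀ v ∈ Set.Icc (0:ℝ) 1, dist (φ v x) (φ v y) ≤ ε' := by
    intro x y hxy v hv
    refine H1 x y (le_trans hxy ?_) v hv
    have := min_le_left (δ₁/2) (ε'/8)
    linarith
  have hδD2 : min (δ₁/2) (ε'/8) ≤ ε'/8 := min_le_right _ _
  have hN : 0 < FD.card := by
    obtain ⟨i, -⟩ := hDnet hS.choose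
    exact i.pos
  -- the limsup over the compact set away from singularities
  set IR := Filter.limsup (fun τ : ℝ => ((Real.log
      ((spanNum φ {x : X | σ₀ ≤ Metric.infDist x (SingSet φ)} τ (ε'/2) : ℕ) : ℝ) / τ : ℝ) : EReal))
    Filter.atTop with hIR
  have hIRle : IR ≤ entOn φ {x : X | σ₀ ≤ Metric.infDist x (SingSet φ)} := by
    rw [hIR]
    exact le_iSup₂ (f := fun (ε : ℝ) (_ : 0 < ε) => Filter.limsup (fun t : ℝ =>
      ((Real.log ((spanNum φ {x : X | σ₀ ≤ Metric.infDist x (SingSet φ)} t ε : ℕ) : ℝ) / t : ℝ)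
        : EReal)) Filter.atTop) (ε'/2) (by positivity)
  by_cases hIRtop : IR = ⊤
  · have htop : hStar φ = ⊤ := top_le_iff.mp (by
      rw [← hIRtop]
      exact le_trans hIRle hAH)
    rw [htop]
    exact le_top
  have hIR0 : (0:EReal) ≤ IR := by
    rw [hIR]
    have hev : ∀ᶠ τ in Filter.atTop, (0:EReal) ≤ ((Real.log
        ((spanNum φ {x : X | σ₀ ≤ Metric.infDist x (SingSet φ)} τ (ε'/2) : ℕ) : ℝ) / τ : ℝ)
          : EReal) := by
      filter_upwards [Filter.eventually_gt_atTop (0:ℝ)] with τ hτ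
      have : (0:ℝ) ≤ Real.log ((spanNum φ {x : X | σ₀ ≤ Metric.infDist x (SingSet φ)}
          τ (ε'/2) : ℕ) : ℝ) / τ :=
        div_nonneg (Real.log_natCast_nonneg _) (le_of_lt hτ)
      exact_mod_cast EReal.coe_nonneg.mpr this
    calc (0:EReal) = Filter.limsup (fun _ : ℝ => (0:EReal)) Filter.atTop :=
          (Filter.limsup_const _).symm
      _ ≤ _ := Filter.limsup_le_limsup hev
  have hIRbot : IR ≠ ⊥ := by
    intro hbot
    rw [hbot] at hIR0
    exact absurd hIR0 (by simp)
  have hvIR : ((IR.toReal : ℝ) : EReal) = IR := EReal.coe_toReal hIRtop hIRbot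
  have hmain : Filter.limsup (fun t : ℝ => ((Real.log
      ((spanNum φ (Set.univ : Set X) t ε' : ℕ) : ℝ) / t : ℝ) : EReal)) Filter.atTop ≤
      ((IR.toReal : ℝ) : EReal) := by
    apply ereal_le_coe_of_forall
    intro η hη
    have hη2 : 0 < η/2 := by positivity
    have hfreq : ∃ᶠ τ in Filter.atTop, ((Real.log
        ((spanNum φ {x : X | σ₀ ≤ Metric.infDist x (SingSet φ)} τ (ε'/2) : ℕ) : ℝ) / τ : ℝ)
          : EReal) ≤ IR + ((η/2 : ℝ) : EReal) := by
      by_contra hnot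
      rw [Filter.not_frequently] at hnot
      have hev : ∀ᶠ τ in Filter.atTop, IR + ((η/2:ℝ):EReal) ≤ ((Real.log
          ((spanNum φ {x : X | σ₀ ≤ Metric.infDist x (SingSet φ)} τ (ε'/2) : ℕ) : ℝ) / τ : ℝ)
            : EReal) := by
        filter_upwards [hnot] with τ hτ
        exact le_of_lt (lt_of_not_ge hτ)
      have hle : IR + ((η/2:ℝ):EReal) ≤ IR := by
        rw [hIR]
        exact Filter.le_limsup_of_frequently_le hev.frequently
      rw [← hvIR, ← EReal.coe_add] at hle
      rw [← hvIR] at hle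
      have := EReal.coe_le_coe_iff.mp hle
      linarith
    have hev2 : ∀ᶠ τ in Filter.atTop, (1:ℝ) ≤ τ ∧
        (Real.log ((FD.card : ℝ)+1) + 3*Real.log 2)/τ ≤ η/2 := by
      have hK0 : (0:ℝ) ≤ Real.log ((FD.card : ℝ)+1) + 3*Real.log 2 := by
        have h1 : (0:ℝ) ≤ Real.log ((FD.card : ℝ)+1) :=
          Real.log_nonneg (by exact_mod_cast Nat.one_le_iff_ne_zero.mpr (by positivity))
        have h2 : (0:ℝ) ≤ Real.log 2 := Real.log_nonneg (by norm_num)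
        linarith
      filter_upwards [Filter.eventually_ge_atTop
        (max 1 ((Real.log ((FD.card : ℝ)+1) + 3*Real.log 2)/(η/2)))] with τ hτ
      have h1 : (1:ℝ) ≤ τ := le_trans (le_max_left _ _) hτ
      refine ⟨h1, ?_⟩
      rw [div_le_iff₀ (lt_of_lt_of_le one_pos h1)]
      have h2 := le_trans (le_max_right 1 _) hτ
      rw [div_le_iff₀ hη2] at h2
      nlinarith
    obtain ⟨T, hgT, hT1, hTsm⟩ := (hfreq.and_eventually hev2).exists
    obtain ⟨S, hmb⟩ := master_bound hφ hS hσ₀ hσw hε' hDnet hδD1 hδD2 T hT1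
    have hls := limsup_log_div_le
      (C1 := (spanNum φ {x : X | σ₀ ≤ Metric.infDist x (SingSet φ)} T (ε'/2) + FD.card + 2) * 2)
      (C2 := (FD.card ^ ⌈T⌉₊) ^ S) (by omega)
      (Nat.one_le_pow _ _ (Nat.one_le_pow _ _ hN)) hT1 hmb
    refine le_trans hls ?_
    apply EReal.coe_le_coe_iff.mpr
    set r := spanNum φ {x : X | σ₀ ≤ Metric.infDist x (SingSet φ)} T (ε'/2) with hr
    have hT0 : (0:ℝ) < T := lt_of_lt_of_le one_pos hT1
    have hgTr : Real.log (r : ℝ) / T ≤ IR.toReal + η/2 := by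
      rw [← hvIR, ← EReal.coe_add] at hgT
      exact EReal.coe_le_coe_iff.mp hgT
    have hlogb : Real.log ((((r + FD.card + 2) * 2 : ℕ)) : ℝ) ≤
        Real.log (r : ℝ) + (Real.log ((FD.card : ℝ)+1) + 3*Real.log 2) := by
      have hstep1 : (((r + FD.card + 2) * 2 : ℕ) : ℝ) ≤ 4 * ((r:ℝ)+1) * ((FD.card:ℝ)+1) := by
        push_cast
        nlinarith [Nat.cast_nonneg (α := ℝ) r, Nat.cast_nonneg (α := ℝ) FD.card]
      have hstep2 : Real.log ((((r + FD.card + 2) * 2 : ℕ)) : ℝ) ≤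
          Real.log (4 * ((r:ℝ)+1) * ((FD.card:ℝ)+1)) := by
        apply Real.log_le_log (by positivity) hstep1
      have hstep3 : Real.log (4 * ((r:ℝ)+1) * ((FD.card:ℝ)+1)) =
          Real.log 4 + Real.log ((r:ℝ)+1) + Real.log ((FD.card:ℝ)+1) := by
        rw [Real.log_mul (by positivity) (by positivity),
          Real.log_mul (by positivity) (by positivity)]
      have hstep4 : Real.log ((r:ℝ)+1) ≤ Real.log (r : ℝ) + Real.log 2 := by
        rcases Nat.eq_zero_or_pos r with hr0 | hr0
        · rw [hr0]
          simp only [Nat.cast_zero, zero_add, Real.log_one, Real.log_zero]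
          exact Real.log_nonneg (by norm_num)
        · have : ((r:ℝ)+1) ≤ 2 * (r:ℝ) := by
            have : (1:ℝ) ≤ (r:ℝ) := by exact_mod_cast hr0
            linarith
          calc Real.log ((r:ℝ)+1) ≤ Real.log (2 * (r:ℝ)) :=
                Real.log_le_log (by positivity) this
            _ = Real.log 2 + Real.log (r:ℝ) := Real.log_mul (by norm_num)
                (by positivity)
            _ = Real.log (r:ℝ) + Real.log 2 := by ring
      have hlog4 : Real.log 4 = 2 * Real.log 2 := by
        rw [show (4:ℝ) = 2^2 by norm_num, Real.log_pow]
        push_cast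
        ring
      linarith
    calc Real.log ((((r + FD.card + 2) * 2 : ℕ)) : ℝ) / T
        ≤ (Real.log (r : ℝ) + (Real.log ((FD.card : ℝ)+1) + 3*Real.log 2)) / T :=
          (div_le_div_iff_of_pos_right hT0).mpr hlogb
      _ = Real.log (r : ℝ) / T + (Real.log ((FD.card : ℝ)+1) + 3*Real.log 2) / T := add_div _ _ _
      _ ≤ (IR.toReal + η/2) + η/2 := add_le_add hgTr hTsm
      _ = IR.toReal + η := by ring
  rw [hvIR] at hmain
  exact le_trans hmain (le_trans hIRle hAH)

end Aux

theorem closed_nonwandering_minus_sing_hstar_eq_entropy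
    [MetricSpace X] [CompactSpace X] (φ : ℝ → X → X) (hφ : IsFlowMap φ)
    (h : IsClosed (NonWandering φ \ SingSet φ)) :
    hStar φ = entOn φ (Set.univ : Set X) := by
  apply le_antisymm (hStar_le_entOn_univ hφ)
  rcases Set.eq_empty_or_nonempty (SingSet φ) with hSE | hS
  · refine entOn_le_hStar isCompact_univ ?_
    rw [hSE]
    simp
  · exact entOn_univ_le_hStar hφ hS h
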